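/- The presented group on six generators x₁, …, x₆ with defining relations x₆x₅x₄x₃x₂x₁ = e, x₄ = x₅, x₁x₂ = x₂x₁, x₂x₁x₂⁻¹x₅x₃ = x₅x₃x₂x₁x₂⁻¹, x₅x₃x₂x₁x₂⁻¹x₅x₃ = x₃x₅x₃x₂x₁x₂⁻¹x₅, x₁x₄ = x₄x₁, x₁x₆ = x₆x₁, x₂ = x₅x₃x₅⁻¹, x₂ = x₆x₄x₃x₄⁻¹x₆⁻¹, (x₆x₅x₄x₅⁻¹x₆⁻¹x₆x₅x₃x₅⁻¹)² = (x₅x₃x₅⁻¹x₆x₅x₄x₅⁻¹x₆⁻¹x₆)² = (x₆x₅x₃x₅⁻¹x₆x₅x₄x₅⁻¹x₆⁻¹)², x₄ = x₆x₅x₆⁻¹ is isomorphic to the direct product of ℤ with the presented group ⟨a, b | (ab)² = (ba)²⟩. -/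

import Mathlib

namespace Stmt7

/-- Generators `x₁, …, x₆` of the free group, indexed by `0, …, 5`. -/
def x (i : Fin 6) : FreeGroup (Fin 6) := FreeGroup.of i

/-- `A = x₆x₅x₄x₅⁻¹x₆⁻¹x₆x₅x₃x₅⁻¹`. -/
def A : FreeGroup (Fin 6) :=
  x 5 * x 4 * x 3 * (x 4)⁻¹ * (x 5)⁻¹ * x 5 * x 4 * x 2 * (x 4)⁻¹

/-- `B = x₅x₃x₅⁻¹x₆x₅x₄x₅⁻¹x₆⁻¹x₆`. -/
def B : FreeGroup (Fin 6) :=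
  x 4 * x 2 * (x 4)⁻¹ * x 5 * x 4 * x 3 * (x 4)⁻¹ * (x 5)⁻¹ * x 5

/-- `C = x₆x₅x₃x₅⁻¹x₆x₅x₄x₅⁻¹x₆⁻¹`. -/
def C : FreeGroup (Fin 6) :=
  x 5 * x 4 * x 2 * (x 4)⁻¹ * x 5 * x 4 * x 3 * (x 4)⁻¹ * (x 5)⁻¹

/-- The relators corresponding to the defining relations. -/
def rels : Set (FreeGroup (Fin 6)) :=
  { x 5 * x 4 * x 3 * x 2 * x 1 * x 0,
    x 3 * (x 4)⁻¹,
    x 0 * x 1 * (x 1 * x 0)⁻¹,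
    (x 1 * x 0 * (x 1)⁻¹ * x 4 * x 2) * (x 4 * x 2 * x 1 * x 0 * (x 1)⁻¹)⁻¹,
    (x 4 * x 2 * x 1 * x 0 * (x 1)⁻¹ * x 4 * x 2) *
      (x 2 * x 4 * x 2 * x 1 * x 0 * (x 1)⁻¹ * x 4)⁻¹,
    x 0 * x 3 * (x 3 * x 0)⁻¹,
    x 0 * x 5 * (x 5 * x 0)⁻¹,
    x 1 * (x 4 * x 2 * (x 4)⁻¹)⁻¹,
    x 1 * (x 5 * x 3 * x 2 * (x 3)⁻¹ * (x 5)⁻¹)⁻¹,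
    A ^ 2 * (B ^ 2)⁻¹,
    B ^ 2 * (C ^ 2)⁻¹,
    x 3 * (x 5 * x 4 * (x 5)⁻¹)⁻¹ }

/-- The single relator `(ab)²((ba)²)⁻¹` of the presentation `⟨a, b | (ab)² = (ba)²⟩`. -/
def rels' : Set (FreeGroup (Fin 2)) :=
  {(FreeGroup.of 0 * FreeGroup.of 1) ^ 2 * ((FreeGroup.of 1 * FreeGroup.of 0) ^ 2)⁻¹}

-- auxiliary
def y (i : Fin 6) : PresentedGroup rels := PresentedGroup.of i

def a : PresentedGroup rels' := PresentedGroup.of 0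
def b : PresentedGroup rels' := PresentedGroup.of 1

lemma rel_mk {α : Type*} {R : Set (FreeGroup α)} {r : FreeGroup α} (h : r ∈ R) :
    PresentedGroup.mk R r = 1 :=
  (QuotientGroup.eq_one_iff _).mpr (Subgroup.subset_normalClosure h)

lemma mk_x (i : Fin 6) : PresentedGroup.mk rels (x i) = y i := rfl

lemma rel' : (a*b)^2 = (b*a)^2 := by
  have h := rel_mk (R := rels') (r := (FreeGroup.of 0 * FreeGroup.of 1) ^ 2 *
      ((FreeGroup.of 1 * FreeGroup.of 0) ^ 2)⁻¹) rfl
  simp only [map_mul, map_inv, map_pow] at h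
  have := mul_inv_eq_one.mp h
  simpa [a, b, PresentedGroup.of] using this

lemma czb : b * (b*a)^2 = (b*a)^2 * b := by
  have h : (b*a)^2 * b = b * (a*b)^2 := by simp [pow_two, mul_assoc]
  rw [h, rel']

lemma cza : a * (b*a)^2 = (b*a)^2 * a := by
  conv_rhs => rw [← rel']
  simp [pow_two, mul_assoc]

-- relations in the big presented group
lemma R1 : y 5 * y 4 * y 3 * y 2 * y 1 * y 0 = 1 := by
  have h := rel_mk (R := rels) (r := x 5 * x 4 * x 3 * x 2 * x 1 * x 0) (Set.mem_insert _ _)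
  simpa only [map_mul, mk_x] using h

lemma R2 : y 3 = y 4 := by
  have h := rel_mk (R := rels) (r := x 3 * (x 4)⁻¹)
    (Set.mem_insert_of_mem _ (Set.mem_insert _ _))
  simp only [map_mul, map_inv, mk_x] at h
  exact mul_inv_eq_one.mp h

lemma R3 : y 0 * y 1 = y 1 * y 0 := by
  have h := rel_mk (R := rels) (r := x 0 * x 1 * (x 1 * x 0)⁻¹)
    (Set.mem_insert_of_mem _ (Set.mem_insert_of_mem _ (Set.mem_insert _ _)))
  simp only [map_mul, map_inv, mk_x] at h
  exact mul_inv_eq_one.mp h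

lemma R4 : (y 1 * y 0 * (y 1)⁻¹ * y 4 * y 2) = (y 4 * y 2 * y 1 * y 0 * (y 1)⁻¹) := by
  have h := rel_mk (R := rels)
    (r := (x 1 * x 0 * (x 1)⁻¹ * x 4 * x 2) * (x 4 * x 2 * x 1 * x 0 * (x 1)⁻¹)⁻¹)
    (Set.mem_insert_of_mem _ (Set.mem_insert_of_mem _ (Set.mem_insert_of_mem _
      (Set.mem_insert _ _))))
  simp only [map_mul, map_inv, mk_x] at h
  exact mul_inv_eq_one.mp h

lemma R5 : (y 4 * y 2 * y 1 * y 0 * (y 1)⁻¹ * y 4 * y 2)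
    = (y 2 * y 4 * y 2 * y 1 * y 0 * (y 1)⁻¹ * y 4) := by
  have h := rel_mk (R := rels)
    (r := (x 4 * x 2 * x 1 * x 0 * (x 1)⁻¹ * x 4 * x 2) *
      (x 2 * x 4 * x 2 * x 1 * x 0 * (x 1)⁻¹ * x 4)⁻¹)
    (Set.mem_insert_of_mem _ (Set.mem_insert_of_mem _ (Set.mem_insert_of_mem _
      (Set.mem_insert_of_mem _ (Set.mem_insert _ _)))))
  simp only [map_mul, map_inv, mk_x] at h
  exact mul_inv_eq_one.mp h

lemma R6 : y 0 * y 3 = y 3 * y 0 := by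
  have h := rel_mk (R := rels) (r := x 0 * x 3 * (x 3 * x 0)⁻¹)
    (Set.mem_insert_of_mem _ (Set.mem_insert_of_mem _ (Set.mem_insert_of_mem _
      (Set.mem_insert_of_mem _ (Set.mem_insert_of_mem _ (Set.mem_insert _ _))))))
  simp only [map_mul, map_inv, mk_x] at h
  exact mul_inv_eq_one.mp h

lemma R8 : y 1 = y 4 * y 2 * (y 4)⁻¹ := by
  have h := rel_mk (R := rels) (r := x 1 * (x 4 * x 2 * (x 4)⁻¹)⁻¹)
    (Set.mem_insert_of_mem _ (Set.mem_insert_of_mem _ (Set.mem_insert_of_mem _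
      (Set.mem_insert_of_mem _ (Set.mem_insert_of_mem _ (Set.mem_insert_of_mem _
      (Set.mem_insert_of_mem _ (Set.mem_insert _ _))))))))
  simp only [map_mul, map_inv, mk_x] at h
  exact mul_inv_eq_one.mp h

-- derived facts
lemma c04 : y 0 * y 4 = y 4 * y 0 := by rw [← R2, R6]

lemma c042 : y 0 * (y 4 * y 2) = (y 4 * y 2) * y 0 := by
  have h4 : y 1 * y 0 * (y 1)⁻¹ = y 0 := by rw [← R3]; simp [mul_assoc]
  have := R4
  rw [h4] at this
  calc y 0 * (y 4 * y 2) = y 0 * y 4 * y 2 := by rw [mul_assoc]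
    _ = y 4 * y 2 * y 1 * y 0 * (y 1)⁻¹ := by rw [← this, mul_assoc]
    _ = y 4 * y 2 * (y 1 * y 0 * (y 1)⁻¹) := by simp [mul_assoc]
    _ = y 4 * y 2 * y 0 := by rw [h4]

lemma c02 : y 0 * y 2 = y 2 * y 0 := by
  have h := c042
  have h4 := c04
  calc y 0 * y 2 = (y 4)⁻¹ * (y 4 * y 0 * y 2) := by simp [mul_assoc]
    _ = (y 4)⁻¹ * (y 0 * y 4 * y 2) := by rw [← h4]
    _ = (y 4)⁻¹ * (y 0 * (y 4 * y 2)) := by simp only [mul_assoc]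
    _ = (y 4)⁻¹ * (y 4 * y 2 * y 0) := by rw [h]
    _ = y 2 * y 0 := by simp [mul_assoc]

lemma key : (y 4 * y 2)^2 = (y 2 * y 4)^2 := by
  have h4 : y 1 * y 0 * (y 1)⁻¹ = y 0 := by rw [← R3]; simp [mul_assoc]
  have h5 := R5
  have e1 : y 4 * y 2 * y 1 * y 0 * (y 1)⁻¹ * y 4 * y 2
      = (y 4 * y 2)^2 * y 0 := by
    calc y 4 * y 2 * y 1 * y 0 * (y 1)⁻¹ * y 4 * y 2
        = y 4 * y 2 * (y 1 * y 0 * (y 1)⁻¹) * y 4 * y 2 := by simp [mul_assoc]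
      _ = y 4 * y 2 * y 0 * y 4 * y 2 := by rw [h4]
      _ = y 4 * y 2 * (y 0 * (y 4 * y 2)) := by simp [mul_assoc]
      _ = y 4 * y 2 * ((y 4 * y 2) * y 0) := by rw [c042]
      _ = (y 4 * y 2)^2 * y 0 := by simp [pow_two, mul_assoc]
  have e2 : y 2 * y 4 * y 2 * y 1 * y 0 * (y 1)⁻¹ * y 4
      = (y 2 * y 4)^2 * y 0 := by
    calc y 2 * y 4 * y 2 * y 1 * y 0 * (y 1)⁻¹ * y 4
        = y 2 * y 4 * y 2 * (y 1 * y 0 * (y 1)⁻¹) * y 4 := by simp [mul_assoc]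
      _ = y 2 * y 4 * y 2 * (y 0 * y 4) := by rw [h4]; simp [mul_assoc]
      _ = y 2 * y 4 * y 2 * (y 4 * y 0) := by rw [c04]
      _ = (y 2 * y 4)^2 * y 0 := by simp [pow_two, mul_assoc]
  rw [e1, e2] at h5
  exact mul_right_cancel h5

lemma h5eq : y 5 = (y 0)⁻¹ * ((y 4 * y 2)^2)⁻¹ := by
  have h1 := R1
  have hkey : y 4 * (y 4 * y 2)^2 = (y 4 * y 2)^2 * y 4 := by
    calc y 4 * (y 4 * y 2)^2 = y 4 * (y 2 * y 4)^2 := by rw [key]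
      _ = (y 4 * y 2)^2 * y 4 := by simp [pow_two, mul_assoc]
  have e : y 5 * y 4 * y 3 * y 2 * y 1 = y 5 * ((y 4 * y 2)^2 * y 4 * (y 4)⁻¹) := by
    rw [R2, R8, ← hkey]
    simp [pow_two, mul_assoc]
  have : y 5 * ((y 4 * y 2)^2 * y 4 * (y 4)⁻¹) * y 0 = 1 := by rw [← e]; exact h1
  simp only [mul_inv_cancel_right] at this
  have h' : y 5 * ((y 4 * y 2)^2 * y 0) = 1 := by rw [← mul_assoc]; exact this
  rw [mul_eq_one_iff_eq_inv.mp h', mul_inv_rev]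


def t : Multiplicative ℤ := Multiplicative.ofAdd 1
def z : PresentedGroup rels' := (b*a)^2

def f : Fin 6 → Multiplicative ℤ × PresentedGroup rels'
  | 0 => (t, 1)
  | 1 => (1, b*a*b⁻¹)
  | 2 => (1, a)
  | 3 => (1, b)
  | 4 => (1, b)
  | 5 => (t⁻¹, z⁻¹)

lemma f0 : f 0 = (t, 1) := rfl
lemma f1 : f 1 = (1, b*a*b⁻¹) := rfl
lemma f2 : f 2 = (1, a) := rfl
lemma f3 : f 3 = (1, b) := rfl
lemma f4 : f 4 = (1, b) := rfl
lemma f5 : f 5 = (t⁻¹, z⁻¹) := rfl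

lemma zdef : z = (b*a)^2 := rfl
lemma Cb : Commute z b := czb.symm
lemma Ca : Commute z a := cza.symm
lemma czbz : b * z = z * b := Cb.symm.eq

lemma sqA : (z⁻¹ * (b * ((b*a) * b⁻¹)))^2 = z⁻¹ := by
  have Cu : Commute z⁻¹ (b*((b*a)*b⁻¹)) :=
    (Cb.mul_right ((Cb.mul_right Ca).mul_right Cb.inv_right)).inv_left
  rw [Cu.mul_pow]
  have h : (b*((b*a)*b⁻¹))^2 = b * (b*a)^2 * b⁻¹ := by simp [pow_two, mul_assoc]
  rw [h, ← zdef, czbz]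
  simp [pow_two, mul_assoc]

lemma sqB : (z⁻¹*(b*a))^2 = z⁻¹ := by
  have Cv : Commute z⁻¹ (b*a) := (Cb.mul_right Ca).inv_left
  rw [Cv.mul_pow, ← zdef]
  simp [pow_two, mul_assoc]

lemma WB : b*a*b⁻¹*z⁻¹*b*b*b⁻¹*z⁻¹⁻¹*z⁻¹ = z⁻¹*(b*a) := by
  have h1 : b*a*b⁻¹*z⁻¹*b*b*b⁻¹*z⁻¹⁻¹*z⁻¹ = b*(a*(b⁻¹*(z⁻¹*b))) := by simp [mul_assoc]
  rw [h1, Cb.inv_left.eq, show b⁻¹*(b*(z⁻¹ : PresentedGroup rels')) = z⁻¹ from by simp,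
    Ca.inv_left.symm.eq, ← mul_assoc, ← Cb.inv_left.eq, mul_assoc]

lemma WC : z⁻¹*b*a*b⁻¹*z⁻¹*b*b*b⁻¹*z⁻¹⁻¹ = z⁻¹*(b*a) := by
  have h1 : z⁻¹*b*a*b⁻¹*z⁻¹*b*b*b⁻¹*z⁻¹⁻¹ = z⁻¹*(b*(a*(b⁻¹*(z⁻¹*(b*z))))) := by
    simp [mul_assoc]
  rw [h1, czbz]
  simp [mul_assoc]

lemma hf : ∀ r ∈ rels, FreeGroup.lift f r = 1 := by
  intro r hr
  simp only [rels, Set.mem_insert_iff, Set.mem_singleton_iff] at hr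
  rcases hr with rfl|rfl|rfl|rfl|rfl|rfl|rfl|rfl|rfl|rfl|rfl|rfl <;>
    simp only [A, B, C, x, map_mul, map_inv, map_pow, FreeGroup.lift_apply_of,
      f0, f1, f2, f3, f4, f5, Prod.mk_mul_mk, Prod.inv_mk, Prod.pow_mk, Prod.mk_eq_one] <;>
    refine ⟨by decide, ?_⟩
  · -- r1
    trans (z⁻¹ * (b * (b*a)^2 * b⁻¹))
    · simp [pow_two, mul_assoc]
    · rw [← zdef, czbz]; simp [mul_assoc]
  · simp
  · simp [mul_assoc]
  · simp [mul_assoc]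
  · -- r5
    trans ((b*a)^2 * (((a*b)^2)⁻¹))
    · simp [pow_two, mul_assoc]
    · rw [rel']; simp
  · simp
  · simp
  · simp [mul_assoc]
  · -- r9
    have c9 : Commute z ((b*a)*b⁻¹) := (Cb.mul_right Ca).mul_right Cb.inv_right
    trans (b*a*b⁻¹ * (z⁻¹*(b*a*b⁻¹*z))⁻¹)
    · simp [mul_assoc]
    · rw [c9.symm.eq]; simp [mul_assoc]
  · -- r10
    rw [show (z⁻¹*b*b*b⁻¹*z⁻¹⁻¹*z⁻¹*b*a*b⁻¹ : _) = z⁻¹ * (b*((b*a)*b⁻¹)) from by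
        simp [mul_assoc],
      WB, sqA, sqB]
    simp
  · -- r11
    rw [WB, WC]
    simp
  · -- r12
    trans (b * (z⁻¹*(b*z))⁻¹)
    · simp [mul_assoc]
    · rw [czbz]; simp [mul_assoc]


def φ : PresentedGroup rels →* Multiplicative ℤ × PresentedGroup rels' :=
  PresentedGroup.toGroup hf

def g : Fin 2 → PresentedGroup rels
  | 0 => y 2
  | 1 => y 4

lemma g0 : g 0 = y 2 := rfl
lemma g1 : g 1 = y 4 := rfl

lemma hg : ∀ r ∈ rels', FreeGroup.lift g r = 1 := by
  intro r hr
  simp only [rels', Set.mem_singleton_iff] at hr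
  subst hr
  simp only [map_mul, map_inv, map_pow, FreeGroup.lift_apply_of, g0, g1]
  rw [← key]
  simp

def ψg : PresentedGroup rels' →* PresentedGroup rels := PresentedGroup.toGroup hg
def ψz : Multiplicative ℤ →* PresentedGroup rels := zpowersHom _ (y 0)

lemma comm : ∀ m n, Commute (ψz m) (ψg n) := by
  have h0 : ∀ n, Commute (y 0) (ψg n) := by
    intro n
    induction n with
    | _ w =>
      have hmk : ∀ w, ψg (PresentedGroup.mk rels' w) = FreeGroup.lift g w := fun _ => rfl
      rw [hmk]
      induction w using FreeGroup.induction_on with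
      | C1 => simp
      | of i =>
        fin_cases i
        · exact c02
        · exact c04
      | inv_of i h => rw [map_inv]; exact h.inv_right
      | mul u v hu hv => rw [map_mul]; exact hu.mul_right hv
  intro m n
  have : ψz m = y 0 ^ m.toAdd := rfl
  rw [this]
  exact (h0 n).zpow_left m.toAdd

def ψ : Multiplicative ℤ × PresentedGroup rels' →* PresentedGroup rels :=
  MonoidHom.noncommCoprod ψz ψg comm

lemma leftInv : ψ.comp φ = MonoidHom.id (PresentedGroup rels) := by
  ext i
  fin_cases i
  · show ψ (φ (y 0)) = y 0
    have h := (PresentedGroup.toGroup.of hf (x := 0))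
    rw [show φ (y 0) = f 0 from h, f0]
    show ψz t * ψg 1 = y 0
    simp [ψz, t]
  · show ψ (φ (y 1)) = y 1
    have h := (PresentedGroup.toGroup.of hf (x := 1))
    rw [show φ (y 1) = f 1 from h, f1]
    show ψz 1 * ψg (b*a*b⁻¹) = y 1
    simp only [map_one, one_mul, map_mul, map_inv]
    rw [(show ψg b = y 4 from PresentedGroup.toGroup.of hg (x := 1)), (show ψg a = y 2 from PresentedGroup.toGroup.of hg (x := 0))]
    exact R8.symm
  · show ψ (φ (y 2)) = y 2
    have h := (PresentedGroup.toGroup.of hf (x := 2))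
    rw [show φ (y 2) = f 2 from h, f2]
    show ψz 1 * ψg a = y 2
    simp only [map_one, one_mul]
    exact (show ψg a = y 2 from PresentedGroup.toGroup.of hg (x := 0))
  · show ψ (φ (y 3)) = y 3
    have h := (PresentedGroup.toGroup.of hf (x := 3))
    rw [show φ (y 3) = f 3 from h, f3]
    show ψz 1 * ψg b = y 3
    simp only [map_one, one_mul]
    rw [(show ψg b = y 4 from PresentedGroup.toGroup.of hg (x := 1))]
    exact R2.symm
  · show ψ (φ (y 4)) = y 4
    have h := (PresentedGroup.toGroup.of hf (x := 4))
    rw [show φ (y 4) = f 4 from h, f4]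
    show ψz 1 * ψg b = y 4
    simp only [map_one, one_mul]
    exact (show ψg b = y 4 from PresentedGroup.toGroup.of hg (x := 1))
  · show ψ (φ (y 5)) = y 5
    have h := (PresentedGroup.toGroup.of hf (x := 5))
    rw [show φ (y 5) = f 5 from h, f5]
    show ψz t⁻¹ * ψg z⁻¹ = y 5
    rw [show ψz t⁻¹ = (y 0)⁻¹ from by simp [ψz, t], map_inv, zdef, map_pow, map_mul,
      (show ψg b = y 4 from PresentedGroup.toGroup.of hg (x := 1)), (show ψg a = y 2 from PresentedGroup.toGroup.of hg (x := 0))]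
    exact h5eq.symm

lemma rightInv : φ.comp ψ = MonoidHom.id (Multiplicative ℤ × PresentedGroup rels') := by
  have hL : (φ.comp ψ).comp (MonoidHom.inl _ _) = MonoidHom.inl _ _ := by
    apply MonoidHom.ext_mint
    show φ (ψ (Multiplicative.ofAdd 1, 1)) = (Multiplicative.ofAdd 1, 1)
    rw [show ψ (Multiplicative.ofAdd 1, 1) = ψz (Multiplicative.ofAdd 1) * ψg 1 from rfl]
    simp only [map_one, mul_one]
    rw [show ψz (Multiplicative.ofAdd 1) = y 0 from by simp [ψz]]
    show FreeGroup.lift f (x 0) = _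
    rw [show x 0 = FreeGroup.of 0 from rfl, FreeGroup.lift_apply_of, f0, t]
  have hR : (φ.comp ψ).comp (MonoidHom.inr _ _) = MonoidHom.inr _ _ := by
    apply PresentedGroup.ext
    intro i
    fin_cases i
    · show φ (ψ (1, a)) = (1, a)
      rw [show ψ (1, a) = ψz 1 * ψg a from rfl]
      simp only [map_one, one_mul]
      rw [show ψg a = y 2 from PresentedGroup.toGroup.of hg (x := 0)]
      show FreeGroup.lift f (x 2) = _
      rw [show x 2 = FreeGroup.of 2 from rfl, FreeGroup.lift_apply_of, f2]
    · show φ (ψ (1, b)) = (1, b)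
      rw [show ψ (1, b) = ψz 1 * ψg b from rfl]
      simp only [map_one, one_mul]
      rw [show ψg b = y 4 from PresentedGroup.toGroup.of hg (x := 1)]
      show FreeGroup.lift f (x 4) = _
      rw [show x 4 = FreeGroup.of 4 from rfl, FreeGroup.lift_apply_of, f4]
  apply MonoidHom.ext
  intro p
  have hp : p = (p.1, 1) * (1, p.2) := by simp
  rw [hp, map_mul, map_mul]
  rw [show ((p.1, 1) : Multiplicative ℤ × PresentedGroup rels') = MonoidHom.inl _ _ p.1 from rfl,
    show ((1, p.2) : Multiplicative ℤ × PresentedGroup rels') = MonoidHom.inr _ _ p.2 from rfl]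
  rw [← MonoidHom.comp_apply, ← MonoidHom.comp_apply, hL, hR]
  simp

def iso : PresentedGroup rels ≃* Multiplicative ℤ × PresentedGroup rels' where
  toFun := φ
  invFun := ψ
  left_inv w := DFunLike.congr_fun leftInv w
  right_inv p := DFunLike.congr_fun rightInv p
  map_mul' := map_mul φ

theorem presentation_iso :
    Nonempty (PresentedGroup rels ≃* (Multiplicative ℤ × PresentedGroup rels')) := by
  exact ⟨iso⟩

end Stmt7
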